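/- For every λ₁ > 0, λ₂ ≥ 0 and every real ω, the series ∑_{k=0}^∞ [e^{−λ₂/2} (λ₂/2)^k / k!] · (1 − 2iω)^{−λ₁/2 − k} converges and equals exp( i λ₂ ω / (1 − 2iω) ) · (1 − 2iω)^{−λ₁/2}, where complex powers of 1 − 2iω are taken with the principal branch (note Re(1 − 2iω) = 1 > 0). -/

import Mathlib

open Complex

/-- For every `λ₁ > 0`, `λ₂ ≥ 0` and real `ω`, the series
`∑_{k=0}^∞ [e^{−λ₂/2} (λ₂/2)^k / k!] · (1 − 2iω)^{−λ₁/2 − k}` converges and equals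
`exp(i λ₂ ω / (1 − 2iω)) · (1 − 2iω)^{−λ₁/2}` (principal-branch complex powers). -/
theorem sncChiSq_char_series (lam1 lam2 ω : ℝ) (hlam1 : 0 < lam1) (hlam2 : 0 ≤ lam2) :
    HasSum
      (fun k : ℕ =>
        ((Real.exp (-lam2 / 2) * (lam2 / 2) ^ k / (Nat.factorial k) : ℝ) : ℂ) *
          (1 - 2 * Complex.I * (ω : ℂ)) ^ (-(lam1 : ℂ) / 2 - (k : ℂ)))
      (Complex.exp (Complex.I * (lam2 : ℂ) * (ω : ℂ) / (1 - 2 * Complex.I * (ω : ℂ))) *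
        (1 - 2 * Complex.I * (ω : ℂ)) ^ (-(lam1 : ℂ) / 2)) := by
  set z : ℂ := 1 - 2 * Complex.I * (ω : ℂ) with hz_def
  have hz : z ≠ 0 := by
    intro h
    have := congrArg Complex.re h
    simp [hz_def] at this
  have hexp : HasSum (fun k : ℕ => ((lam2 : ℂ) / 2 / z) ^ k / (Nat.factorial k))
      (Complex.exp ((lam2 : ℂ) / 2 / z)) := by
    rw [Complex.exp_eq_exp_ℂ]
    exact NormedSpace.expSeries_div_hasSum_exp _
  have h := hexp.mul_left (z ^ (-(lam1 : ℂ) / 2) * Complex.exp (-(lam2 : ℂ) / 2))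
  have hterm : (fun k : ℕ => z ^ (-(lam1 : ℂ) / 2) * Complex.exp (-(lam2 : ℂ) / 2) *
      (((lam2 : ℂ) / 2 / z) ^ k / (Nat.factorial k))) =
      (fun k : ℕ =>
        ((Real.exp (-lam2 / 2) * (lam2 / 2) ^ k / (Nat.factorial k) : ℝ) : ℂ) *
          z ^ (-(lam1 : ℂ) / 2 - (k : ℂ))) := by
    funext k
    have h1 : z ^ (-(lam1 : ℂ) / 2 - (k : ℂ)) = z ^ (-(lam1 : ℂ) / 2) * (z ^ k)⁻¹ := by
      rw [sub_eq_add_neg, Complex.cpow_add _ _ hz, Complex.cpow_neg, Complex.cpow_natCast]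
    rw [h1]
    have hfac : ((Nat.factorial k : ℂ)) ≠ 0 := by exact_mod_cast (Nat.factorial_ne_zero k)
    have hzk : (z : ℂ) ^ k ≠ 0 := pow_ne_zero _ hz
    rw [show ((Real.exp (-lam2 / 2) * (lam2 / 2) ^ k / (Nat.factorial k) : ℝ) : ℂ) =
        Complex.exp (-(lam2 : ℂ) / 2) * ((lam2 : ℂ) / 2) ^ k / (Nat.factorial k) by
      push_cast [Complex.ofReal_exp]; ring_nf]
    rw [div_pow]
    field_simp
  rw [hterm] at h
  have hval : z ^ (-(lam1 : ℂ) / 2) * Complex.exp (-(lam2 : ℂ) / 2) *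
      Complex.exp ((lam2 : ℂ) / 2 / z) =
      Complex.exp (Complex.I * (lam2 : ℂ) * (ω : ℂ) / z) * z ^ (-(lam1 : ℂ) / 2) := by
    rw [mul_assoc, ← Complex.exp_add, mul_comm]
    congr 2
    field_simp [hz_def]
    ring
  rwa [hval] at h
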